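/- There exists a finite connected simple graph of order 9 with a vertex of degree 8 that is uniquely dimensional with metric dimension 3. -/

import Mathlib

open SimpleGraph

/-- `W` is a resolving set for `G`: any two distinct vertices are distinguished
by their distance to some vertex of `W`. -/
def IsResolvingSet {V : Type*} (G : SimpleGraph V) (W : Finset V) : Prop :=
  ∀ u v : V, u ≠ v → ∃ w ∈ W, G.dist u w ≠ G.dist v w

/-- The metric dimension of `G`: the minimum cardinality of a resolving set. -/
noncomputable def metricDim {V : Type*} (G : SimpleGraph V) : ℕ :=
  sInf {k | ∃ W : Finset V, IsResolvingSet G W ∧ W.card = k}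

/-- `B` is a metric basis: a resolving set of minimum cardinality. -/
def IsMetricBasis {V : Type*} (G : SimpleGraph V) (B : Finset V) : Prop :=
  IsResolvingSet G B ∧ B.card = metricDim G

/-- `G` is uniquely dimensional: it has exactly one metric basis. -/
def UniquelyDimensional {V : Type*} (G : SimpleGraph V) : Prop :=
  ∃! B : Finset V, IsMetricBasis G B

/-- `G` is uniquely `k`-dimensional: a unique metric basis and metric dimension `k`. -/
def UniquelyKDimensional {V : Type*} (G : SimpleGraph V) (k : ℕ) : Prop :=
  UniquelyDimensional G ∧ metricDim G = k

/-- Adjacency matrix of our example graph. Vertex `0` is universal. -/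
def A9 : Fin 9 → Fin 9 → Bool :=
  ![![false,true ,true ,true ,true ,true ,true ,true ,true ],
    ![true ,false,true ,true ,true ,false,false,false,false],
    ![true ,true ,false,false,true ,false,false,true ,true ],
    ![true ,true ,false,false,true ,false,true ,true ,false],
    ![true ,true ,true ,true ,false,true ,true ,true ,false],
    ![true ,false,false,false,true ,false,true ,true ,false],
    ![true ,false,false,true ,true ,true ,false,true ,true ],
    ![true ,false,true ,true ,true ,true ,true ,false,true ],
    ![true ,false,true ,false,false,false,true ,true ,false]]

def G9 : SimpleGraph (Fin 9) where
  Adj u v := A9 u v = true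
  symm := ⟨fun u v h => (by decide : ∀ u v : Fin 9, A9 u v = true → A9 v u = true) u v h⟩
  loopless := ⟨fun v h => absurd h ((by decide : ∀ v : Fin 9, ¬ A9 v v = true) v)⟩

instance : DecidableRel G9.Adj := fun u v => inferInstanceAs (Decidable (A9 u v = true))

/-- Explicit distance function. -/
def d9 (u v : Fin 9) : ℕ := if u = v then 0 else if A9 u v then 1 else 2

lemma univ0 : ∀ v : Fin 9, v ≠ 0 → G9.Adj 0 v := by decide

lemma G9_preconnected : G9.Preconnected := by
  have h : ∀ u : Fin 9, G9.Reachable u 0 := by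
    intro u
    by_cases hu : u = 0
    · subst hu; exact Reachable.refl 0
    · exact ((univ0 u hu).symm).reachable
  intro u v
  exact (h u).trans (h v).symm

lemma G9_connected : G9.Connected := (SimpleGraph.connected_iff G9).mpr ⟨G9_preconnected, ⟨0⟩⟩

lemma dist_eq_d9 : ∀ u v : Fin 9, G9.dist u v = d9 u v := by
  intro u v
  by_cases huv : u = v
  · simp [d9, huv]
  · by_cases ha : G9.Adj u v
    · have h1 : G9.dist u v = 1 := SimpleGraph.dist_eq_one_iff_adj.mpr ha
      have hA : A9 u v = true := ha
      rw [show d9 u v = 1 from by unfold d9; rw [if_neg huv, if_pos hA]]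
      exact h1
    · have hA : A9 u v = false := by
        cases h : A9 u v
        · rfl
        · exact absurd h ha
      have hu : u ≠ 0 := by
        intro h
        exact ha (h ▸ univ0 v (fun hv => huv (h.trans hv.symm)))
      have hv : v ≠ 0 := by
        intro h
        exact ha ((h ▸ univ0 u hu).symm)
      have hle : G9.dist u v ≤ 2 := by
        have := SimpleGraph.dist_le (SimpleGraph.Walk.cons ((univ0 u hu).symm)
            (SimpleGraph.Walk.cons (univ0 v hv) SimpleGraph.Walk.nil))
        simpa using this
      have h0 : G9.dist u v ≠ 0 := fun h => huv (G9_connected.dist_eq_zero_iff.mp h)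
      have h1 : G9.dist u v ≠ 1 := fun h => ha (SimpleGraph.dist_eq_one_iff_adj.mp h)
      have : G9.dist u v = 2 := by omega
      simp [d9, huv, hA, this]

/-- Decidable reformulation of resolving sets for `G9`. -/
def ResD (W : Finset (Fin 9)) : Prop :=
  ∀ u v : Fin 9, u ≠ v → ∃ w ∈ W, d9 u w ≠ d9 v w

instance : DecidablePred ResD := fun W => by unfold ResD; infer_instance

lemma res_iff (W : Finset (Fin 9)) : IsResolvingSet G9 W ↔ ResD W := by
  unfold IsResolvingSet ResD
  simp only [dist_eq_d9]

lemma resB0 : ResD {1, 2, 8} := by decide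

lemma ResD_mono {W W' : Finset (Fin 9)} (h : W ⊆ W') (hW : ResD W) : ResD W' := by
  intro u v huv
  obtain ⟨w, hw, hd⟩ := hW u v huv
  exact ⟨w, h hw, hd⟩

set_option maxHeartbeats 1000000 in
lemma no_small2 : ∀ a b : Fin 9, ¬ ResD {a, b} := by decide

set_option maxHeartbeats 1000000 in
lemma unique3' : ∀ a b c : Fin 9, ResD {a, b, c} → ({a, b, c} : Finset (Fin 9)) = {1, 2, 8} := by
  decide

lemma no_small : ∀ W : Finset (Fin 9), W.card ≤ 2 → ¬ ResD W := by
  intro W hc hW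
  have : ∃ a b : Fin 9, W ⊆ {a, b} := by
    interval_cases h : W.card
    · exact ⟨0, 1, by simp [Finset.card_eq_zero.mp h]⟩
    · obtain ⟨a, rfl⟩ := Finset.card_eq_one.mp h
      exact ⟨a, a, by simp⟩
    · obtain ⟨a, b, -, rfl⟩ := Finset.card_eq_two.mp h
      exact ⟨a, b, subset_rfl⟩
  obtain ⟨a, b, hsub⟩ := this
  exact no_small2 a b (ResD_mono hsub hW)

lemma unique3 : ∀ B : Finset (Fin 9), ResD B → B.card = 3 → B = {1, 2, 8} := by
  intro B hB hc
  obtain ⟨a, b, c, -, -, -, rfl⟩ := Finset.card_eq_three.mp hc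
  exact unique3' a b c hB

lemma metricDim_G9 : metricDim G9 = 3 := by
  unfold metricDim
  have hmem : (3:ℕ) ∈ {k | ∃ W : Finset (Fin 9), IsResolvingSet G9 W ∧ W.card = k} :=
    ⟨{1, 2, 8}, (res_iff _).mpr resB0, by decide⟩
  apply le_antisymm
  · exact Nat.sInf_le hmem
  · apply le_csInf ⟨3, hmem⟩
    rintro b ⟨W, hW, rfl⟩
    by_contra h
    exact no_small W (by omega) ((res_iff W).mp hW)

theorem stmt15 :
    ∃ G : SimpleGraph (Fin 9), G.Connected ∧ UniquelyKDimensional G 3 ∧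
      ∃ v, Nat.card (G.neighborSet v) = 8 := by
  refine ⟨G9, G9_connected, ⟨⟨{1, 2, 8}, ?_, ?_⟩, metricDim_G9⟩, ⟨0, ?_⟩⟩
  · exact ⟨(res_iff _).mpr resB0, by rw [metricDim_G9]; decide⟩
  · rintro B ⟨hres, hcard⟩
    exact unique3 B ((res_iff B).mp hres) (hcard.trans metricDim_G9)
  · rw [Nat.card_eq_fintype_card, SimpleGraph.card_neighborSet_eq_degree]
    decide
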